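/- Let p be a prime, n ≥ 1, and C a subset of ((ℤ/pℤ) × (ℤ/pℤ))ⁿ. Let ℓ and ℓ' be positive squarefree integers with ℓ ≡ 3 (mod 4), ℓ' ≡ 3 (mod 4), p ∤ ℓ, p ∤ ℓ', ℓ < ℓ', and such that ℓ and ℓ' are admissible for the same ring (i.e., for odd p the Legendre symbols (−ℓ/p) and (−ℓ'/p) are equal, and for p = 2 one has ℓ ≡ ℓ' (mod 8)). Put d = (ℓ+1)/4 and d' = (ℓ'+1)/4. Then for every natural number k with k < (ℓ+1)/4, the coefficient of q^k in θ_{Λ,d}(C) equals the coefficient of q^k in θ_{Λ,d'}(C), where θ_{Λ,e}(C) ∈ ℤ[[q]] is the formal power series whose coefficient of q^k is the number of pairs (x,y) ∈ ℤⁿ × ℤⁿ with ((x_i mod p, y_i mod p))_i ∈ C and ∑_{i=1}^n Q_e(x_i,y_i) = k. -/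

import Mathlib

noncomputable section

/-- The positive definite quadratic form `Q_e(x,y) = x² + xy + e y²`. -/
def Qform (e : ℕ) (x y : ℤ) : ℤ := x ^ 2 + x * y + (e : ℤ) * y ^ 2

/-- The theta series of the Construction A lattice of a code
`C ⊆ ((ℤ/p) × (ℤ/p))ⁿ` for the form `Q_e`: the coefficient of `q^k` counts pairs of
integer vectors `(x,y)` whose componentwise reduction mod `p` lies in `C` and with
`∑ᵢ Q_e(xᵢ,yᵢ) = k`. -/
def thetaLambda (p e n : ℕ) (C : Finset (Fin n → ZMod p × ZMod p)) : PowerSeries ℤ :=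
  PowerSeries.mk fun k =>
    (Set.ncard {xy : (Fin n → ℤ) × (Fin n → ℤ) |
      (fun i => (((xy.1 i : ℤ) : ZMod p), ((xy.2 i : ℤ) : ZMod p))) ∈ C ∧
      (∑ i, Qform e (xy.1 i) (xy.2 i)) = (k : ℤ)} : ℤ)


lemma Qform_nonneg (e : ℕ) (he : 1 ≤ e) (x y : ℤ) : 0 ≤ Qform e x y := by
  have he' : (1 : ℤ) ≤ (e : ℤ) := by exact_mod_cast he
  unfold Qform
  nlinarith [sq_nonneg (2*x + y), sq_nonneg y]

lemma Qform_big (e : ℕ) (he : 1 ≤ e) (x y : ℤ) (hy : y ≠ 0) : (e : ℤ) ≤ Qform e x y := by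
  have he' : (1 : ℤ) ≤ (e : ℤ) := by exact_mod_cast he
  have hy2 : (1 : ℤ) ≤ y ^ 2 := by
    have := sq_nonneg y
    rcases lt_or_eq_of_le this with h | h
    · omega
    · exact absurd (pow_eq_zero_iff (n := 2) (by norm_num) |>.mp h.symm) hy
  unfold Qform
  nlinarith [sq_nonneg (2*x + y)]

lemma yzero_of_mem (e n : ℕ) (he : 1 ≤ e) (k : ℕ) (hk : (k : ℤ) < e)
    (x y : Fin n → ℤ) (hsum : (∑ i, Qform e (x i) (y i)) = (k : ℤ)) :
    ∀ i, y i = 0 := by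
  intro i
  by_contra hy
  have h1 : (e : ℤ) ≤ Qform e (x i) (y i) := Qform_big e he _ _ hy
  have h2 : Qform e (x i) (y i) ≤ ∑ j, Qform e (x j) (y j) :=
    Finset.single_le_sum (fun j _ => Qform_nonneg e he (x j) (y j)) (Finset.mem_univ i)
  omega

lemma theta_coeff_eq (p n : ℕ) (C : Finset (Fin n → ZMod p × ZMod p))
    (e e' : ℕ) (he : 1 ≤ e) (he' : 1 ≤ e') (k : ℕ)
    (hk : (k : ℤ) < e) (hk' : (k : ℤ) < e') :
    PowerSeries.coeff (R := ℤ) k (thetaLambda p e n C) =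
      PowerSeries.coeff (R := ℤ) k (thetaLambda p e' n C) := by
  simp only [thetaLambda, PowerSeries.coeff_mk]
  congr 1
  apply congrArg
  ext ⟨x, y⟩
  simp only [Set.mem_setOf_eq]
  constructor
  · rintro ⟨hC, hsum⟩
    have hy := yzero_of_mem e n he k hk x y hsum
    refine ⟨hC, ?_⟩
    rw [← hsum]
    apply Finset.sum_congr rfl
    intro i _
    rw [hy i]
    simp [Qform]
  · rintro ⟨hC, hsum⟩
    have hy := yzero_of_mem e' n he' k hk' x y hsum
    refine ⟨hC, ?_⟩
    rw [← hsum]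
    apply Finset.sum_congr rfl
    intro i _
    rw [hy i]
    simp [Qform]

theorem stmt6 (p n : ℕ) (hp : p.Prime) (hn : 1 ≤ n)
    (C : Finset (Fin n → ZMod p × ZMod p))
    (ℓ ℓ' : ℕ) (hℓpos : 0 < ℓ) (hℓ'pos : 0 < ℓ')
    (hsf : Squarefree ℓ) (hsf' : Squarefree ℓ')
    (hmod : ℓ % 4 = 3) (hmod' : ℓ' % 4 = 3)
    (hpl : ¬ p ∣ ℓ) (hpl' : ¬ p ∣ ℓ') (hlt : ℓ < ℓ')
    (hadm_odd : Odd p → (IsSquare ((-(ℓ : ℤ) : ℤ) : ZMod p) ↔ IsSquare ((-(ℓ' : ℤ) : ℤ) : ZMod p)))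
    (hadm_two : p = 2 → ℓ % 8 = ℓ' % 8)
    (d d' : ℕ) (hd : d = (ℓ + 1) / 4) (hd' : d' = (ℓ' + 1) / 4)
    (k : ℕ) (hk : k < (ℓ + 1) / 4) :
    PowerSeries.coeff (R := ℤ) k (thetaLambda p d n C) =
      PowerSeries.coeff (R := ℤ) k (thetaLambda p d' n C) := by
  have hl3 : 3 ≤ ℓ := by omega
  have hd1 : 1 ≤ d := by omega
  have hdd' : d ≤ d' := by
    rw [hd, hd']; exact Nat.div_le_div_right (by omega)
  have hkd : (k : ℤ) < d := by exact_mod_cast (hd ▸ hk)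
  have hkd' : (k : ℤ) < d' := by
    have : k < d' := lt_of_lt_of_le (hd ▸ hk) hdd'
    exact_mod_cast this
  exact theta_coeff_eq p n C d d' hd1 (le_trans hd1 hdd') k hkd hkd'
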